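/- arXiv:1512.07797 — 2 statements merged into one kernel-verified Lean document; each statement's English description precedes it below -/
import Mathlib

section
/- Let l : 2^V → ℝ be modular and increasing with l(∅) = 0. Then for every s ∈ ℝ^p, the Lovász hinge (increasing case) satisfies L1_l(s) = Σ_{j=1}^p max(s_j, 0) · l({j}). In particular, for the Hamming loss l(A) = |A|, the Lovász hinge coincides with the additive hinge loss of an SVM: L1_l(s) = Σ_{j=1}^p max(s_j, 0). -/
open Finset

/-- The chain {σ₁,…,σⱼ}: the image under σ of the first j indices. -/
def chainSet {p : ℕ} (σ : Equiv.Perm (Fin p)) (j : ℕ) : Finset (Fin p) :=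
  (Finset.univ.filter fun k : Fin p => (k : ℕ) < j).image σ

/-- G_l(σ, s) = Σ_{j=1}^p s_{σ_j}·(l({σ₁,…,σⱼ}) − l({σ₁,…,σ_{j−1}})). -/
def lovaszSum {p : ℕ} (l : Finset (Fin p) → ℝ) (σ : Equiv.Perm (Fin p))
    (s : Fin p → ℝ) : ℝ :=
  ∑ j : Fin p, s (σ j) * (l (chainSet σ ((j : ℕ) + 1)) - l (chainSet σ (j : ℕ)))

/-- Indicator vector 1_A ∈ {0,1}^p of A ⊆ V. -/
def indic {p : ℕ} (A : Finset (Fin p)) : Fin p → ℝ := fun i => if i ∈ A then 1 else 0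

/-- A permutation sorting s in decreasing order: s_{π_1} ≥ … ≥ s_{π_p}. -/
def SortsDesc {p : ℕ} (π : Equiv.Perm (Fin p)) (s : Fin p → ℝ) : Prop :=
  ∀ j k : Fin p, j ≤ k → s (π k) ≤ s (π j)

/-- A canonical permutation sorting s in decreasing order. -/
noncomputable def sortDesc {p : ℕ} (s : Fin p → ℝ) : Equiv.Perm (Fin p) :=
  Tuple.sort (fun i => -s i)

/-- The Lovász extension ℓ̂(s) = G_l(π, s) for a permutation π sorting s
decreasingly (independent of the choice of such π). -/
noncomputable def lovaszExt {p : ℕ} (l : Finset (Fin p) → ℝ) (s : Fin p → ℝ) : ℝ :=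
  lovaszSum l (sortDesc s) s

/-- Submodularity: l(A) + l(B) ≥ l(A ∪ B) + l(A ∩ B). -/
def Submodular {p : ℕ} (l : Finset (Fin p) → ℝ) : Prop :=
  ∀ A B : Finset (Fin p), l (A ∪ B) + l (A ∩ B) ≤ l A + l B

/-- The slack-rescaling surrogate S_l(s) = max_{I⊆V} l(I)·(1 − 2 Σ_{i∈I}(1 − s_i)). -/
noncomputable def slackSur {p : ℕ} (l : Finset (Fin p) → ℝ) (s : Fin p → ℝ) : ℝ :=
  Finset.univ.sup' Finset.univ_nonempty
    (fun I : Finset (Fin p) => l I * (1 - 2 * ∑ i ∈ I, (1 - s i)))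

/-- The margin-rescaling surrogate M_l(s) = max_{I⊆V} ( l(I) − 2 Σ_{i∈I}(1 − s_i) ). -/
noncomputable def marginSur {p : ℕ} (l : Finset (Fin p) → ℝ) (s : Fin p → ℝ) : ℝ :=
  Finset.univ.sup' Finset.univ_nonempty
    (fun I : Finset (Fin p) => l I - 2 * ∑ i ∈ I, (1 - s i))

/-- The Lovász hinge, general (non-monotonic) case. -/
noncomputable def hingeGen {p : ℕ} (l : Finset (Fin p) → ℝ) (s : Fin p → ℝ) : ℝ :=
  Finset.univ.sup' Finset.univ_nonempty
    (fun σ : Equiv.Perm (Fin p) => max 0 (lovaszSum l σ s))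

/-- The Lovász hinge, increasing case (componentwise thresholding). -/
noncomputable def hingeInc {p : ℕ} (l : Finset (Fin p) → ℝ) (s : Fin p → ℝ) : ℝ :=
  Finset.univ.sup' Finset.univ_nonempty
    (fun σ : Equiv.Perm (Fin p) =>
      ∑ j : Fin p, max (s (σ j)) 0 *
        (l (chainSet σ ((j : ℕ) + 1)) - l (chainSet σ (j : ℕ))))

lemma chainSet_succ {p : ℕ} (σ : Equiv.Perm (Fin p)) (j : Fin p) :
    chainSet σ ((j : ℕ) + 1) = insert (σ j) (chainSet σ (j : ℕ)) := by
  unfold chainSet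
  have : (Finset.univ.filter fun k : Fin p => (k : ℕ) < (j : ℕ) + 1)
      = insert j (Finset.univ.filter fun k : Fin p => (k : ℕ) < (j : ℕ)) := by
    ext x
    simp [Nat.lt_succ_iff, le_iff_lt_or_eq, Fin.ext_iff, or_comm]
  rw [this, Finset.image_insert]

lemma self_not_mem_chainSet {p : ℕ} (σ : Equiv.Perm (Fin p)) (j : Fin p) :
    σ j ∉ chainSet σ (j : ℕ) := by
  unfold chainSet
  simp only [Finset.mem_image, Finset.mem_filter, Finset.mem_univ, true_and]
  rintro ⟨k, hk, hkj⟩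
  have := σ.injective hkj
  omega

lemma hingeInc_modular_aux {p : ℕ} (hp : 1 ≤ p) (l : Finset (Fin p) → ℝ)
    (hmod : ∀ A B : Finset (Fin p), l (A ∪ B) + l (A ∩ B) = l A + l B)
    (h0 : l ∅ = 0) (s : Fin p → ℝ) :
    hingeInc l s = ∑ j : Fin p, max (s j) 0 * l {j} := by
  have hterm : ∀ (σ : Equiv.Perm (Fin p)) (j : Fin p),
      l (chainSet σ ((j : ℕ) + 1)) - l (chainSet σ (j : ℕ)) = l {σ j} := by
    intro σ j
    rw [chainSet_succ]
    have hnm := self_not_mem_chainSet σ j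
    have := hmod {σ j} (chainSet σ (j : ℕ))
    have hun : {σ j} ∪ chainSet σ (j : ℕ) = insert (σ j) (chainSet σ (j : ℕ)) := by
      rw [Finset.insert_eq]
    have hin : {σ j} ∩ chainSet σ (j : ℕ) = ∅ := by
      ext x; simp; rintro rfl; exact hnm
    rw [hun, hin, h0] at this
    linarith
  have hconst : ∀ σ : Equiv.Perm (Fin p),
      (∑ j : Fin p, max (s (σ j)) 0 *
        (l (chainSet σ ((j : ℕ) + 1)) - l (chainSet σ (j : ℕ))))
      = ∑ j : Fin p, max (s j) 0 * l {j} := by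
    intro σ
    rw [show (∑ j : Fin p, max (s (σ j)) 0 *
        (l (chainSet σ ((j : ℕ) + 1)) - l (chainSet σ (j : ℕ))))
      = ∑ j : Fin p, max (s (σ j)) 0 * l {σ j} from
        Finset.sum_congr rfl fun j _ => by rw [hterm]]
    exact Fintype.sum_equiv σ _ _ (fun j => rfl)
  unfold hingeInc
  rw [show (fun σ : Equiv.Perm (Fin p) =>
      ∑ j : Fin p, max (s (σ j)) 0 *
        (l (chainSet σ ((j : ℕ) + 1)) - l (chainSet σ (j : ℕ))))
    = fun _ => ∑ j : Fin p, max (s j) 0 * l {j} from funext hconst]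
  exact Finset.sup'_const _ _

/-- for modular increasing l with l(∅)=0 the Lovász hinge is the
weighted additive hinge loss; for the Hamming loss l(A)=|A| it coincides with
the additive SVM hinge loss. -/
theorem hingeInc_modular_eq_additive_hinge (p : ℕ) (hp : 1 ≤ p)
    (l : Finset (Fin p) → ℝ)
    (hmod : ∀ A B : Finset (Fin p), l (A ∪ B) + l (A ∩ B) = l A + l B)
    (hinc : ∀ A B : Finset (Fin p), A ⊆ B → l A ≤ l B) (h0 : l ∅ = 0) :
    (∀ s : Fin p → ℝ, hingeInc l s = ∑ j : Fin p, max (s j) 0 * l {j}) ∧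
      ∀ s : Fin p → ℝ,
        hingeInc (fun A : Finset (Fin p) => (A.card : ℝ)) s =
          ∑ j : Fin p, max (s j) 0 := by
  constructor
  · exact hingeInc_modular_aux hp l hmod h0
  · intro s
    have := hingeInc_modular_aux hp (fun A : Finset (Fin p) => (A.card : ℝ))
      (fun A B => by exact_mod_cast Finset.card_union_add_card_inter A B) (by simp) s
    simpa using this
end

section
/- Let l : 2^V → ℝ be submodular with l(∅) = 0, and suppose the margin-rescaling surrogate M_l is an extension of l, i.e. M_l(1_A) = l(A) for every A ⊆ V. Then for every s ∈ [0,1]^p, M_l(s) ≤ ℓ̂(s); that is, the Lovász extension has equal or higher value than margin rescaling inside the unit cube. -/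
open Finset

/-- Auxiliary: the sorted values extended by 0 beyond the range. -/
noncomputable def uu {p : ℕ} (π : Equiv.Perm (Fin p)) (s : Fin p → ℝ) (j : ℕ) : ℝ :=
  if h : j < p then s (π ⟨j, h⟩) else 0

/-- Auxiliary: shifted sorted values, with `vv 0 = 1`. -/
noncomputable def vv {p : ℕ} (π : Equiv.Perm (Fin p)) (s : Fin p → ℝ) (j : ℕ) : ℝ :=
  if j = 0 then 1 else uu π s (j - 1)

lemma vv_zero {p : ℕ} (π : Equiv.Perm (Fin p)) (s : Fin p → ℝ) : vv π s 0 = 1 := rfl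

lemma vv_succ {p : ℕ} (π : Equiv.Perm (Fin p)) (s : Fin p → ℝ) (j : ℕ) :
    vv π s (j + 1) = uu π s j := by simp [vv]

lemma vv_top {p : ℕ} (π : Equiv.Perm (Fin p)) (s : Fin p → ℝ) :
    vv π s (p + 1) = 0 := by simp [vv, uu]

lemma mem_chainSet {p : ℕ} (σ : Equiv.Perm (Fin p)) (j : ℕ) (i : Fin p) :
    i ∈ chainSet σ j ↔ ((σ.symm i : Fin p) : ℕ) < j := by
  unfold chainSet
  simp only [Finset.mem_image, Finset.mem_filter, Finset.mem_univ, true_and]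
  constructor
  · rintro ⟨k, hk, rfl⟩; simpa using hk
  · intro h; exact ⟨σ.symm i, h, by simp⟩

lemma chainSet_zero {p : ℕ} (σ : Equiv.Perm (Fin p)) : chainSet σ 0 = ∅ := by
  ext i; simp [mem_chainSet]

lemma card_sdiff_sum {p : ℕ} (I A : Finset (Fin p)) :
    ((I \ A).card : ℝ) = ∑ i ∈ I, (if i ∈ A then (0:ℝ) else 1) := by
  rw [Finset.sum_ite, Finset.sum_const, Finset.sum_const]
  simp [Finset.sdiff_eq_filter]

/-- Abel summation: the Lovász sum as a convex-type combination of chain values. -/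
lemma lovaszSum_eq {p : ℕ} (l : Finset (Fin p) → ℝ) (π : Equiv.Perm (Fin p))
    (s : Fin p → ℝ) (h0 : l ∅ = 0) :
    lovaszSum l π s =
      ∑ j ∈ Finset.range (p + 1), (vv π s j - vv π s (j + 1)) * l (chainSet π j) := by
  have hR : ∑ j ∈ Finset.range (p + 1), (vv π s j - vv π s (j + 1)) * l (chainSet π j)
      = ∑ j ∈ Finset.range p, vv π s (j + 1) *
          (l (chainSet π (j + 1)) - l (chainSet π j)) := by
    have h1 : ∑ j ∈ Finset.range (p + 1), vv π s j * l (chainSet π j)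
        = ∑ j ∈ Finset.range p, vv π s (j + 1) * l (chainSet π (j + 1)) := by
      rw [Finset.sum_range_succ']
      simp [vv_zero, chainSet_zero, h0]
    have h2 : ∑ j ∈ Finset.range (p + 1), vv π s (j + 1) * l (chainSet π j)
        = ∑ j ∈ Finset.range p, vv π s (j + 1) * l (chainSet π j) := by
      rw [Finset.sum_range_succ, vv_top]
      ring
    calc ∑ j ∈ Finset.range (p + 1), (vv π s j - vv π s (j + 1)) * l (chainSet π j)
        = ∑ j ∈ Finset.range (p + 1), (vv π s j * l (chainSet π j)
            - vv π s (j + 1) * l (chainSet π j)) := by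
          refine Finset.sum_congr rfl fun j _ => by ring
      _ = ∑ j ∈ Finset.range (p + 1), vv π s j * l (chainSet π j)
            - ∑ j ∈ Finset.range (p + 1), vv π s (j + 1) * l (chainSet π j) :=
          Finset.sum_sub_distrib _ _
      _ = ∑ j ∈ Finset.range p, vv π s (j + 1) * l (chainSet π (j + 1))
            - ∑ j ∈ Finset.range p, vv π s (j + 1) * l (chainSet π j) := by rw [h1, h2]
      _ = _ := by rw [← Finset.sum_sub_distrib]; exact Finset.sum_congr rfl fun j _ => by ring
  rw [hR]
  rw [show (∑ j ∈ Finset.range p, vv π s (j + 1) *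
      (l (chainSet π (j + 1)) - l (chainSet π j)))
    = ∑ j : Fin p, vv π s ((j : ℕ) + 1) *
      (l (chainSet π ((j : ℕ) + 1)) - l (chainSet π (j : ℕ)))
    from (Fin.sum_univ_eq_sum_range _ p).symm]
  unfold lovaszSum
  refine Finset.sum_congr rfl fun j _ => ?_
  rw [vv_succ]
  unfold uu
  rw [dif_pos j.isLt]

/-- The coefficient identity: `1 - s i` as a combination of chain indicators. -/
lemma one_sub_eq {p : ℕ} (π : Equiv.Perm (Fin p)) (s : Fin p → ℝ) (i : Fin p) :
    ∑ j ∈ Finset.range (p + 1), (vv π s j - vv π s (j + 1)) *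
      (if i ∈ chainSet π j then (0:ℝ) else 1) = 1 - s i := by
  set k : ℕ := ((π.symm i : Fin p) : ℕ) with hk
  have hkp : k < p := (π.symm i).isLt
  have hmem : ∀ j, (i ∈ chainSet π j ↔ k < j) := fun j => mem_chainSet π j i
  have hstep : ∀ j ∈ Finset.range (p + 1),
      (vv π s j - vv π s (j + 1)) * (if i ∈ chainSet π j then (0:ℝ) else 1)
      = if j ∈ Finset.range (k + 1) then vv π s j - vv π s (j + 1) else 0 := by
    intro j _
    by_cases h : k < j
    · rw [if_pos ((hmem j).2 h), if_neg (by simp [Finset.mem_range]; omega)]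
      ring
    · rw [if_neg (fun hh => h ((hmem j).1 hh)), if_pos (by simp [Finset.mem_range]; omega)]
      ring
  have hinter : Finset.range (p + 1) ∩ Finset.range (k + 1) = Finset.range (k + 1) :=
    Finset.inter_eq_right.mpr (Finset.range_subset_range.mpr (by omega))
  rw [Finset.sum_congr rfl hstep, Finset.sum_ite_mem, hinter,
    Finset.sum_range_sub' (vv π s), vv_zero, vv_succ]
  unfold uu
  rw [dif_pos hkp]
  congr 2
  have he : (⟨k, hkp⟩ : Fin p) = π.symm i := Fin.ext (by simp [hk])
  rw [he, Equiv.apply_symm_apply]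

/-- if margin rescaling yields an extension of a submodular l,
then inside the unit cube it is dominated by the Lovász extension. -/
theorem margin_le_lovasz_on_cube (p : ℕ) (hp : 1 ≤ p)
    (l : Finset (Fin p) → ℝ) (hsub : Submodular l) (h0 : l ∅ = 0)
    (hext : ∀ A : Finset (Fin p), marginSur l (indic A) = l A) :
    ∀ s ∈ Set.Icc (0 : Fin p → ℝ) 1, marginSur l s ≤ lovaszExt l s := by
  intro s hs
  obtain ⟨hs0, hs1⟩ := hs
  have hs0' : ∀ i, 0 ≤ s i := fun i => hs0 i
  have hs1' : ∀ i, s i ≤ 1 := fun i => hs1 i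
  set π : Equiv.Perm (Fin p) := sortDesc s with hπ
  have hanti : ∀ a b : Fin p, a ≤ b → s (π b) ≤ s (π a) := by
    intro a b hab
    have h := Tuple.monotone_sort (fun i => -s i) hab
    simp only [Function.comp_apply] at h
    have h' : -s (π a) ≤ -s (π b) := h
    linarith
  -- key inequality from extension property
  have hkey : ∀ I A : Finset (Fin p), l I - 2 * ((I \ A).card : ℝ) ≤ l A := by
    intro I A
    have h1 : l I - 2 * ∑ i ∈ I, (1 - indic A i) ≤ marginSur l (indic A) := by
      unfold marginSur
      exact Finset.le_sup' (fun J : Finset (Fin p) => l J - 2 * ∑ i ∈ J, (1 - indic A i))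
        (Finset.mem_univ I)
    rw [hext A] at h1
    have h2 : ∑ i ∈ I, (1 - indic A i) = ((I \ A).card : ℝ) := by
      rw [card_sdiff_sum]
      refine Finset.sum_congr rfl fun i _ => ?_
      unfold indic
      by_cases h : i ∈ A <;> simp [h]
    rw [h2] at h1
    exact h1
  -- nonnegativity of the coefficients
  have hlam : ∀ j ∈ Finset.range (p + 1), 0 ≤ vv π s j - vv π s (j + 1) := by
    intro j hj
    rw [Finset.mem_range] at hj
    have hj' : j ≤ p := Nat.lt_succ_iff.mp hj
    match j with
    | 0 =>
      rw [vv_zero, vv_succ]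
      unfold uu
      split
      · have := hs1' (π ⟨0, by omega⟩); linarith
      · norm_num
    | Nat.succ m =>
      rw [vv_succ, vv_succ]
      unfold uu
      by_cases h1 : m + 1 < p
      · rw [dif_pos h1, dif_pos (by omega : m < p)]
        have := hanti ⟨m, by omega⟩ ⟨m + 1, h1⟩ (by simp)
        linarith
      · rw [dif_neg h1, dif_pos (by omega : m < p)]
        have := hs0' (π ⟨m, by omega⟩)
        linarith
  have hsum1 : ∑ j ∈ Finset.range (p + 1), (vv π s j - vv π s (j + 1)) = 1 := by
    rw [Finset.sum_range_sub' (vv π s), vv_zero, vv_top]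
    ring
  -- main bound
  have hmain : ∀ I : Finset (Fin p),
      l I - 2 * ∑ i ∈ I, (1 - s i) ≤ lovaszSum l π s := by
    intro I
    have e1 : ∑ i ∈ I, (1 - s i)
        = ∑ j ∈ Finset.range (p + 1), (vv π s j - vv π s (j + 1)) *
            ((I \ chainSet π j).card : ℝ) := by
      calc ∑ i ∈ I, (1 - s i)
          = ∑ i ∈ I, ∑ j ∈ Finset.range (p + 1), (vv π s j - vv π s (j + 1)) *
              (if i ∈ chainSet π j then (0:ℝ) else 1) :=
            Finset.sum_congr rfl fun i _ => (one_sub_eq π s i).symm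
        _ = ∑ j ∈ Finset.range (p + 1), ∑ i ∈ I, (vv π s j - vv π s (j + 1)) *
              (if i ∈ chainSet π j then (0:ℝ) else 1) := Finset.sum_comm
        _ = _ := by
            refine Finset.sum_congr rfl fun j _ => ?_
            rw [← Finset.mul_sum, ← card_sdiff_sum]
    have e2 : l I - 2 * ∑ i ∈ I, (1 - s i)
        = ∑ j ∈ Finset.range (p + 1), (vv π s j - vv π s (j + 1)) *
            (l I - 2 * ((I \ chainSet π j).card : ℝ)) := by
      have : ∑ j ∈ Finset.range (p + 1), (vv π s j - vv π s (j + 1)) *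
            (l I - 2 * ((I \ chainSet π j).card : ℝ))
          = (∑ j ∈ Finset.range (p + 1), (vv π s j - vv π s (j + 1))) * l I
            - 2 * ∑ j ∈ Finset.range (p + 1), (vv π s j - vv π s (j + 1)) *
                ((I \ chainSet π j).card : ℝ) := by
        rw [Finset.sum_mul, Finset.mul_sum, ← Finset.sum_sub_distrib]
        exact Finset.sum_congr rfl fun j _ => by ring
      rw [this, hsum1, ← e1]
      ring
    rw [e2, lovaszSum_eq l π s h0]
    refine Finset.sum_le_sum fun j hj => ?_
    exact mul_le_mul_of_nonneg_left (hkey I (chainSet π j)) (hlam j hj)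
  have hfin : lovaszExt l s = lovaszSum l π s := rfl
  rw [hfin]
  exact Finset.sup'_le _ _ fun I _ => hmain I
end
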